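/- Approximation of squares of operators in Schatten norms (Lemma 8): let O and Õ be operators on a finite-dimensional complex Hilbert space, let p ≥ 1, and let 0 ≤ δ ≤ 1 be such that ‖O − Õ‖_{2p} ≤ δ ‖O‖_{2p}. Then ‖O†O − Õ†Õ‖_p ≤ 3δ ‖O†O‖_p. -/

import Mathlib

open scoped BigOperators

namespace Paper

variable {ι : Type*} [Fintype ι] [DecidableEq ι] {d : ℕ}

/-- The space of operators on a system of qudits indexed by `ι`, each of local dimension `d`. -/
abbrev Op (ι : Type*) [Fintype ι] [DecidableEq ι] (d : ℕ) : Type _ :=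
  Matrix (ι → Fin d) (ι → Fin d) ℂ

open Classical in
/-- `A` acts as the identity on all sites outside `X`. -/
def SupportedOn (X : Set ι) (A : Op ι d) : Prop :=
  ∃ B : Matrix (X → Fin d) (X → Fin d) ℂ,
    ∀ i j : ι → Fin d,
      A i j = if ∀ x ∉ X, i x = j x then B (fun x => i x.1) (fun x => j x.1) else 0

/-- Operator norm of a matrix, i.e. the norm as an operator on Euclidean space. -/
noncomputable def opNorm {m : Type*} [Fintype m] [DecidableEq m] (A : Matrix m m ℂ) : ℝ :=
  ‖Matrix.toEuclideanCLM (𝕜 := ℂ) A‖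

/-- Schatten `p`-norm `(Tr ((A† A)^{p/2}))^{1/p}` of a matrix. -/
noncomputable def schattenNorm {m : Type*} [Fintype m] [DecidableEq m] (p : ℝ)
    (A : Matrix m m ℂ) : ℝ :=
  (∑ i, (Matrix.isHermitian_conjTranspose_mul_self A).eigenvalues i ^ (p / 2)) ^ (1 / p)

/-- Matrix exponential. -/
noncomputable def mexp {m : Type*} [Fintype m] [DecidableEq m] (A : Matrix m m ℂ) :
    Matrix m m ℂ :=
  NormedSpace.exp A

/-- The Gibbs state `e^{-βH} / Tr e^{-βH}`. -/
noncomputable def gibbs (β : ℝ) (H : Op ι d) : Op ι d :=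
  (Matrix.trace (mexp ((-(β : ℂ)) • H)))⁻¹ • mexp ((-(β : ℂ)) • H)

/-- Reduced density matrix on the sites in `L` (partial trace over the complement). -/
noncomputable def restrictOut (L : Finset ι) (ρ : Op ι d) :
    Matrix ({x // x ∈ L} → Fin d) ({x // x ∈ L} → Fin d) ℂ :=
  Matrix.of fun a b =>
    ∑ c : {x // x ∉ L} → Fin d,
      ρ (fun x => if h : x ∈ L then a ⟨x, h⟩ else c ⟨x, h⟩)
        (fun x => if h : x ∈ L then b ⟨x, h⟩ else c ⟨x, h⟩)

open Classical in
/-- Von Neumann entropy `-Tr ρ log ρ` (via eigenvalues; junk value for non-Hermitian input). -/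
noncomputable def vnEntropy {m : Type*} [Fintype m] [DecidableEq m] (ρ : Matrix m m ℂ) : ℝ :=
  if h : ρ.IsHermitian then -∑ i, h.eigenvalues i * Real.log (h.eigenvalues i) else 0

open Classical in
/-- Rényi-`α` entropy; for `α = 1` this is the von Neumann entropy. -/
noncomputable def renyiEntropy {m : Type*} [Fintype m] [DecidableEq m] (α : ℝ)
    (ρ : Matrix m m ℂ) : ℝ :=
  if h : ρ.IsHermitian then
    if α = 1 then -∑ i, h.eigenvalues i * Real.log (h.eigenvalues i)
    else (1 - α)⁻¹ * Real.log (∑ i, h.eigenvalues i ^ α)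
  else 0

/-- Mutual information `S(ρ_L) + S(ρ_{Lᶜ}) - S(ρ)` for the bipartition `L ⊔ Lᶜ`. -/
noncomputable def mutualInfo (L : Finset ι) (ρ : Op ι d) : ℝ :=
  vnEntropy (restrictOut L ρ) + vnEntropy (restrictOut Lᶜ ρ) - vnEntropy ρ

/-- `O` admits a Schmidt decomposition with `m` terms across the bipartition
`Lset ⊔ Lsetᶜ`; i.e. the Schmidt rank of `O` across this cut is at most `m`. -/
def SchmidtDecompSet (Lset : Set ι) (O : Op ι d) (m : ℕ) : Prop :=
  ∃ A B : Fin m → Op ι d,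
    (∀ s, SupportedOn Lset (A s)) ∧ (∀ s, SupportedOn Lsetᶜ (B s)) ∧ O = ∑ s, A s * B s

/-- Schmidt decomposition across the cut `{1,…,i} | {i+1,…,n}` of a chain
(`0`-indexed: left part is the sites `< i`). -/
def SchmidtDecomp {n : ℕ} (i : ℕ) (O : Op (Fin n) d) (m : ℕ) : Prop :=
  SchmidtDecompSet {x : Fin n | (x : ℕ) < i} O m

/-- A function of the configuration of all sites depends only on the sites in `Lset`. -/
def DependsOnlyOn (Lset : Set ι) (f : (ι → Fin d) → ℂ) : Prop :=
  ∀ u v : ι → Fin d, (∀ x ∈ Lset, u x = v x) → f u = f v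

/-- Schmidt decomposition with `m` terms of a vector across the bipartition `Lset ⊔ Lsetᶜ`. -/
def VecSchmidtDecomp (Lset : Set ι) (ψ : (ι → Fin d) → ℂ) (m : ℕ) : Prop :=
  ∃ a b : Fin m → ((ι → Fin d) → ℂ),
    (∀ s, DependsOnlyOn Lset (a s)) ∧ (∀ s, DependsOnlyOn Lsetᶜ (b s)) ∧
      ∀ u, ψ u = ∑ s, a s u * b s u

/-- The rank-one density matrix `|ψ⟩⟨ψ|`. -/
noncomputable def pureDM (ψ : (ι → Fin d) → ℂ) : Op ι d :=
  Matrix.of fun u v => ψ u * (starRingEnd ℂ) (ψ v)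

/-- A nearest-neighbour Hamiltonian on a chain of `n` qudits: `h i` is the interaction
between sites `i` and `i+1` (`0`-indexed), and
`‖h_{i-1,i}‖ + ‖h_{i,i+1}‖ ≤ 1` for every site `i`. -/
structure NNChain (n d : ℕ) where
  h : ℕ → Op (Fin n) d
  supported : ∀ i : ℕ, SupportedOn {x : Fin n | (x : ℕ) = i ∨ (x : ℕ) = i + 1} (h i)
  hermitian : ∀ i : ℕ, (h i).IsHermitian
  norm_le : ∀ i : ℕ, 1 ≤ i → opNorm (h (i - 1)) + opNorm (h i) ≤ 1

/-- The Hamiltonian `H = ∑_{i=1}^{n-1} h_{i,i+1}` of a nearest-neighbour chain. -/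
noncomputable def NNChain.H {n d : ℕ} (C : NNChain n d) : Op (Fin n) d :=
  ∑ i ∈ Finset.range (n - 1), C.h i

/-- A `k`-local Hamiltonian on a chain of `n` qudits with interaction strength `g`:
a collection of Hermitian terms `h X` supported on sets `X` of diameter at most `k`,
with `∑_{X ∋ i} ‖h X‖ ≤ g` for every site `i`. -/
structure KLocal (n d k : ℕ) (g : ℝ) where
  h : Finset (Fin n) → Op (Fin n) d
  supported : ∀ X : Finset (Fin n), SupportedOn (X : Set (Fin n)) (h X)
  hermitian : ∀ X : Finset (Fin n), (h X).IsHermitian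
  diam_le : ∀ X : Finset (Fin n), h X ≠ 0 → ∀ x ∈ X, ∀ y ∈ X, (y : ℕ) < (x : ℕ) + k
  strength : ∀ i : Fin n,
    ∑ X ∈ Finset.univ.filter (fun X : Finset (Fin n) => i ∈ X), opNorm (h X) ≤ g
  empty_zero : h ∅ = 0

/-- The full Hamiltonian `H = ∑_X h_X` of a `k`-local chain. -/
noncomputable def KLocal.H {n d k : ℕ} {g : ℝ} (C : KLocal n d k g) : Op (Fin n) d :=
  ∑ X : Finset (Fin n), C.h X

open scoped Matrix

set_option linter.unusedSectionVars false
set_option maxHeartbeats 1000000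

open Matrix Finset

private lemma rank_unitary_conj (W : Matrix ι ι ℂ) (hW : W ∈ Matrix.unitaryGroup ι ℂ)
    (M : Matrix ι ι ℂ) : (W * M * Wᴴ).rank = M.rank := by
  have h1 : IsUnit W.det := Matrix.UnitaryGroup.det_isUnit ⟨W, hW⟩
  have h2 : IsUnit (Wᴴ).det := Matrix.UnitaryGroup.det_isUnit ⟨Wᴴ, Unitary.star_mem hW⟩
  rw [Matrix.rank_mul_eq_left_of_isUnit_det _ _ h2,
    Matrix.rank_mul_eq_right_of_isUnit_det _ _ h1]

private lemma count_ne_eq_rank {N : Matrix ι ι ℂ} (W : Matrix ι ι ℂ)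
    (hW : W ∈ Matrix.unitaryGroup ι ℂ) (μ : ι → ℝ)
    (hdec : N = W * Matrix.diagonal (fun i => (μ i : ℂ)) * Wᴴ) (x : ℝ) :
    (N - x • 1).rank = (Finset.univ.filter (fun i => μ i ≠ x)).card := by
  have hWW : W * Wᴴ = 1 := Matrix.mem_unitaryGroup_iff.mp hW
  have key : N - x • 1 = W * Matrix.diagonal (fun i => ((μ i - x : ℝ) : ℂ)) * Wᴴ := by
    have h1 : (x : ℂ) • (1 : Matrix ι ι ℂ) = W * ((x:ℂ) • 1) * Wᴴ := by
      rw [mul_smul_comm, smul_mul_assoc, mul_one, hWW]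
    have h2 : (x : ℝ) • (1 : Matrix ι ι ℂ) = (x : ℂ) • (1 : Matrix ι ι ℂ) := by
      ext i j; simp [Matrix.smul_apply, Matrix.one_apply]
    rw [hdec, h2, h1, ← Matrix.sub_mul, ← Matrix.mul_sub]
    congr 2
    ext i j
    rcases eq_or_ne i j with rfl | hij
    · simp
    · simp [Matrix.diagonal_apply_ne _ hij, Matrix.one_apply_ne hij]
  rw [key, rank_unitary_conj W hW, Matrix.rank_diagonal]
  rw [Fintype.card_subtype]
  congr 1
  apply Finset.filter_congr
  intro i _
  norm_num [sub_eq_zero]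

private lemma eig_sum_eq {N : Matrix ι ι ℂ} (hN : N.IsHermitian)
    (W : Matrix ι ι ℂ) (hW : W ∈ Matrix.unitaryGroup ι ℂ) (μ : ι → ℝ)
    (hdec : N = W * Matrix.diagonal (fun i => (μ i : ℂ)) * Wᴴ) (f : ℝ → ℝ) :
    ∑ i, f (hN.eigenvalues i) = ∑ i, f (μ i) := by
  have hspec : N = (hN.eigenvectorUnitary : Matrix ι ι ℂ)
      * Matrix.diagonal (fun i => ((hN.eigenvalues i : ℝ) : ℂ))
      * (hN.eigenvectorUnitary : Matrix ι ι ℂ)ᴴ := by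
    simpa [Matrix.star_eq_conjTranspose, Function.comp_def] using hN.spectral_theorem
  have hcount : ∀ x : ℝ, (Finset.univ.filter (fun i => hN.eigenvalues i = x)).card
      = (Finset.univ.filter (fun i => μ i = x)).card := by
    intro x
    have h1 := count_ne_eq_rank (hN.eigenvectorUnitary : Matrix ι ι ℂ)
      (hN.eigenvectorUnitary).2 hN.eigenvalues hspec x
    have h2 := count_ne_eq_rank W hW μ hdec x
    have e1 := Finset.card_filter_add_card_filter_not
      (s := Finset.univ) (p := fun i => hN.eigenvalues i = x)
    have e2 := Finset.card_filter_add_card_filter_not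
      (s := Finset.univ) (p := fun i => μ i = x)
    have h12 : (Finset.univ.filter (fun i => ¬ hN.eigenvalues i = x)).card
        = (Finset.univ.filter (fun i => ¬ μ i = x)).card := by
      have := h1.symm.trans h2
      simpa [Ne] using this
    omega
  have hms : Finset.univ.val.map hN.eigenvalues = Finset.univ.val.map μ := by
    apply Multiset.ext.mpr
    intro x
    rw [Multiset.count_map, Multiset.count_map]
    have : ∀ (g : ι → ℝ), (Multiset.filter (fun a => x = g a) Finset.univ.val).card
        = (Finset.univ.filter (fun i => g i = x)).card := by
      intro g
      rw [← Finset.filter_val]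
      · simp [Finset.card, eq_comm]
    rw [this, this, hcount]
  calc ∑ i, f (hN.eigenvalues i) = ((Finset.univ.val.map hN.eigenvalues).map f).sum := by
        rw [Multiset.map_map]; rfl
    _ = ((Finset.univ.val.map μ).map f).sum := by rw [hms]
    _ = ∑ i, f (μ i) := by rw [Multiset.map_map]; rfl

private lemma unitary_conj_mul {W : Matrix ι ι ℂ} (hW : W ∈ Matrix.unitaryGroup ι ℂ)
    (a b : ι → ℂ) : (W * Matrix.diagonal a * Wᴴ) * (W * Matrix.diagonal b * Wᴴ)
      = W * Matrix.diagonal (fun i => a i * b i) * Wᴴ := by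
  have h : Wᴴ * W = 1 := by
    rw [← Matrix.star_eq_conjTranspose]
    exact Matrix.mem_unitaryGroup_iff'.mp hW
  calc (W * Matrix.diagonal a * Wᴴ) * (W * Matrix.diagonal b * Wᴴ)
      = W * Matrix.diagonal a * (Wᴴ * W) * Matrix.diagonal b * Wᴴ := by
        simp only [Matrix.mul_assoc]
    _ = W * (Matrix.diagonal a * Matrix.diagonal b) * Wᴴ := by
        rw [h]; simp only [Matrix.mul_assoc, Matrix.one_mul]
    _ = W * Matrix.diagonal (fun i => a i * b i) * Wᴴ := by
        rw [Matrix.diagonal_mul_diagonal]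

private lemma unitary_conj_ct (W : Matrix ι ι ℂ) (a : ι → ℂ) :
    (W * Matrix.diagonal a * Wᴴ)ᴴ = W * Matrix.diagonal (fun i => star (a i)) * Wᴴ := by
  simp only [Matrix.conjTranspose_mul, Matrix.conjTranspose_conjTranspose,
    Matrix.diagonal_conjTranspose, Matrix.mul_assoc]
  rfl

private lemma trace_unitary_conj {W : Matrix ι ι ℂ} (hW : W ∈ Matrix.unitaryGroup ι ℂ)
    (d : ι → ℂ) : Matrix.trace (W * Matrix.diagonal d * Wᴴ) = ∑ i, d i := by
  rw [Matrix.trace_mul_cycle]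
  have h : Wᴴ * W = 1 := by
    rw [← Matrix.star_eq_conjTranspose]
    exact Matrix.mem_unitaryGroup_iff'.mp hW
  rw [h, Matrix.one_mul, Matrix.trace_diagonal]

private lemma ds_sum_le {p : ℝ} (hp : 1 < p)
    (S : ι → ι → ℝ) (hS0 : ∀ i j, 0 ≤ S i j) (hrow : ∀ i, ∑ j, S i j ≤ 1)
    (hcol : ∀ j, ∑ i, S i j ≤ 1) (lam c : ι → ℝ) (hlam : ∀ i, 0 ≤ lam i) (hc : ∀ j, 0 ≤ c j)
    (hcq : ∑ j, c j ^ (p / (p - 1)) ≤ 1) :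
    ∑ i, ∑ j, S i j * lam i * c j ≤ (∑ i, lam i ^ p) ^ (1 / p) := by
  set q : ℝ := p / (p - 1) with hq
  have hpq : p.HolderConjugate q := Real.HolderConjugate.conjExponent hp
  have hp0 : p ≠ 0 := by positivity
  have hqpos : 0 < q := hpq.symm.pos
  have hq0 : q ≠ 0 := ne_of_gt hqpos
  have key := Real.inner_le_Lp_mul_Lq_of_nonneg (univ : Finset (ι × ι))
    (f := fun x => S x.1 x.2 ^ (1/p) * lam x.1) (g := fun x => S x.1 x.2 ^ (1/q) * c x.2)
    hpq (fun x _ => mul_nonneg (Real.rpow_nonneg (hS0 x.1 x.2) _) (hlam x.1))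
    (fun x _ => mul_nonneg (Real.rpow_nonneg (hS0 x.1 x.2) _) (hc x.2))
  have e0 : ∀ x : ι × ι, (S x.1 x.2 ^ (1/p) * lam x.1) * (S x.1 x.2 ^ (1/q) * c x.2)
      = S x.1 x.2 * lam x.1 * c x.2 := by
    intro x
    have h1 : S x.1 x.2 ^ (1/p) * S x.1 x.2 ^ (1/q) = S x.1 x.2 := by
      rw [← Real.rpow_add' (hS0 x.1 x.2) (by simp [one_div, hpq.inv_add_inv_eq_one]),
        one_div, one_div, hpq.inv_add_inv_eq_one, Real.rpow_one]
    calc (S x.1 x.2 ^ (1/p) * lam x.1) * (S x.1 x.2 ^ (1/q) * c x.2)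
        = (S x.1 x.2 ^ (1/p) * S x.1 x.2 ^ (1/q)) * lam x.1 * c x.2 := by ring
      _ = S x.1 x.2 * lam x.1 * c x.2 := by rw [h1]
  have e1 : ∀ x : ι × ι, (S x.1 x.2 ^ (1/p) * lam x.1) ^ p = S x.1 x.2 * lam x.1 ^ p := by
    intro x
    rw [Real.mul_rpow (Real.rpow_nonneg (hS0 x.1 x.2) _) (hlam x.1),
      ← Real.rpow_mul (hS0 x.1 x.2), one_div, inv_mul_cancel₀ hp0, Real.rpow_one]
  have e2 : ∀ x : ι × ι, (S x.1 x.2 ^ (1/q) * c x.2) ^ q = S x.1 x.2 * c x.2 ^ q := by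
    intro x
    rw [Real.mul_rpow (Real.rpow_nonneg (hS0 x.1 x.2) _) (hc x.2),
      ← Real.rpow_mul (hS0 x.1 x.2), one_div, inv_mul_cancel₀ hq0, Real.rpow_one]
  have s1 : ∑ x ∈ (univ : Finset (ι × ι)), (S x.1 x.2 ^ (1/p) * lam x.1) ^ p
      ≤ ∑ i, lam i ^ p := by
    rw [Finset.sum_congr rfl (fun x _ => e1 x), ← Finset.univ_product_univ, Finset.sum_product]
    calc ∑ i, ∑ j, S i j * lam i ^ p = ∑ i, lam i ^ p * ∑ j, S i j := by
          congr 1; ext i; rw [Finset.mul_sum]; congr 1; ext j; ring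
      _ ≤ ∑ i, lam i ^ p * 1 := by
          apply Finset.sum_le_sum; intro i _
          exact mul_le_mul_of_nonneg_left (hrow i) (Real.rpow_nonneg (hlam i) _)
      _ = ∑ i, lam i ^ p := by simp
  have s2 : ∑ x ∈ (univ : Finset (ι × ι)), (S x.1 x.2 ^ (1/q) * c x.2) ^ q ≤ 1 := by
    rw [Finset.sum_congr rfl (fun x _ => e2 x), ← Finset.univ_product_univ, Finset.sum_product]
    calc ∑ i, ∑ j, S i j * c j ^ q = ∑ j, c j ^ q * ∑ i, S i j := by
          rw [Finset.sum_comm]; congr 1; ext j; rw [Finset.mul_sum]; congr 1; ext i; ring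
      _ ≤ ∑ j, c j ^ q * 1 := by
          apply Finset.sum_le_sum; intro j _
          exact mul_le_mul_of_nonneg_left (hcol j) (Real.rpow_nonneg (hc j) _)
      _ ≤ 1 := by simpa using hcq
  calc ∑ i, ∑ j, S i j * lam i * c j
      = ∑ x ∈ (univ : Finset (ι × ι)), S x.1 x.2 * lam x.1 * c x.2 := by
        rw [← Finset.univ_product_univ, Finset.sum_product]
    _ = ∑ x ∈ (univ : Finset (ι × ι)),
        (S x.1 x.2 ^ (1/p) * lam x.1) * (S x.1 x.2 ^ (1/q) * c x.2) := by
        exact (Finset.sum_congr rfl (fun x _ => e0 x)).symm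
    _ ≤ (∑ x ∈ (univ : Finset (ι × ι)), (S x.1 x.2 ^ (1/p) * lam x.1) ^ p) ^ (1/p)
        * (∑ x ∈ (univ : Finset (ι × ι)), (S x.1 x.2 ^ (1/q) * c x.2) ^ q) ^ (1/q) := key
    _ ≤ (∑ i, lam i ^ p) ^ (1/p) * 1 := by
        apply mul_le_mul
        · exact Real.rpow_le_rpow (Finset.sum_nonneg fun x _ => by
            exact Real.rpow_nonneg (mul_nonneg (Real.rpow_nonneg (hS0 x.1 x.2) _) (hlam x.1)) _)
            s1 (by positivity)
        · calc (∑ x ∈ (univ : Finset (ι × ι)), (S x.1 x.2 ^ (1/q) * c x.2) ^ q) ^ (1/q)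
              ≤ (1:ℝ) ^ (1/q) := Real.rpow_le_rpow (Finset.sum_nonneg fun x _ => by
                exact Real.rpow_nonneg (mul_nonneg (Real.rpow_nonneg (hS0 x.1 x.2) _) (hc x.2)) _)
                s2 (by positivity)
            _ = 1 := Real.one_rpow _
        · exact Real.rpow_nonneg (Finset.sum_nonneg fun x _ =>
            Real.rpow_nonneg (mul_nonneg (Real.rpow_nonneg (hS0 x.1 x.2) _) (hc x.2)) _) _
        · exact Real.rpow_nonneg (Finset.sum_nonneg fun i _ => Real.rpow_nonneg (hlam i) _) _
    _ = (∑ i, lam i ^ p) ^ (1/p) := by ring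

private lemma ds_sum_le_one
    (S : ι → ι → ℝ) (hS0 : ∀ i j, 0 ≤ S i j) (hrow : ∀ i, ∑ j, S i j ≤ 1)
    (lam c : ι → ℝ) (hlam : ∀ i, 0 ≤ lam i) (hc : ∀ j, 0 ≤ c j) (hc1 : ∀ j, c j ≤ 1) :
    ∑ i, ∑ j, S i j * lam i * c j ≤ ∑ i, lam i := by
  apply Finset.sum_le_sum
  intro i _
  calc ∑ j, S i j * lam i * c j ≤ ∑ j, S i j * lam i := by
        apply Finset.sum_le_sum; intro j _
        calc S i j * lam i * c j ≤ S i j * lam i * 1 :=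
              mul_le_mul_of_nonneg_left (hc1 j) (mul_nonneg (hS0 i j) (hlam i))
          _ = S i j * lam i := by ring
    _ = (∑ j, S i j) * lam i := by rw [Finset.sum_mul]
    _ ≤ 1 * lam i := mul_le_mul_of_nonneg_right (hrow i) (hlam i)
    _ = lam i := one_mul _

private lemma trace_entry (A : Matrix ι ι ℂ) (lam c : ι → ℝ) :
    (Matrix.trace (Matrix.diagonal (fun i => (lam i : ℂ)) * A
      * Matrix.diagonal (fun j => (c j : ℂ)) * Aᴴ)).re
    = ∑ i, ∑ j, Complex.normSq (A i j) * lam i * c j := by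
  have key : ∀ (z : ℂ) (a b : ℝ), ((a:ℂ) * z * (b:ℂ) * star z).re
      = Complex.normSq z * a * b := by
    intro z a b
    have h : (a:ℂ) * z * (b:ℂ) * star z = ((Complex.normSq z * a * b : ℝ) : ℂ) := by
      push_cast
      rw [← Complex.mul_conj]
      rw [Complex.star_def]
      ring
    rw [h, Complex.ofReal_re]
  have hB : ∀ i j, (Matrix.diagonal (fun i => (lam i : ℂ)) * A
      * Matrix.diagonal (fun j => (c j:ℂ))) i j = (lam i : ℂ) * A i j * (c j : ℂ) := by
    intro i j; rw [Matrix.mul_diagonal, Matrix.diagonal_mul]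
  rw [Matrix.trace]
  rw [Complex.re_sum]
  apply Finset.sum_congr rfl
  intro i _
  rw [Matrix.diag_apply, Matrix.mul_apply, Complex.re_sum]
  apply Finset.sum_congr rfl
  intro j _
  rw [hB, Matrix.conjTranspose_apply]
  exact key _ _ _

private lemma unitary_row_sum {A : Matrix ι ι ℂ} (hA : A ∈ Matrix.unitaryGroup ι ℂ) (i : ι) :
    ∑ j, Complex.normSq (A i j) = 1 := by
  have h := Matrix.mem_unitaryGroup_iff.mp hA
  have h2 := congrArg (fun M => M i i) h
  simp only [Matrix.mul_apply, Matrix.one_apply_eq] at h2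
  have h3 : ∀ j, A i j * star A j i = (Complex.normSq (A i j) : ℂ) := by
    intro j
    rw [Matrix.star_apply, ← Complex.mul_conj]
    rfl
  rw [Finset.sum_congr rfl (fun j _ => h3 j)] at h2
  have := congrArg Complex.re h2
  rw [Complex.re_sum] at this
  simpa using this

private lemma unitary_col_sum {A : Matrix ι ι ℂ} (hA : A ∈ Matrix.unitaryGroup ι ℂ) (j : ι) :
    ∑ i, Complex.normSq (A i j) = 1 := by
  have hA' : Aᴴ ∈ Matrix.unitaryGroup ι ℂ := by
    rw [← Matrix.star_eq_conjTranspose]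
    exact Unitary.star_mem hA
  have := unitary_row_sum hA' j
  simpa [Matrix.conjTranspose_apply, Complex.normSq_conj] using this

private lemma trace_psd_bound {p : ℝ} (hp : 1 ≤ p) (X : Matrix ι ι ℂ)
    (W : Matrix ι ι ℂ) (hW : W ∈ Matrix.unitaryGroup ι ℂ) (c : ι → ℝ) (hc0 : ∀ j, 0 ≤ c j)
    (hcase : (1 < p ∧ ∑ j, c j ^ (p/(p-1)) ≤ 1) ∨ (p = 1 ∧ ∀ j, c j ≤ 1)) :
    (Matrix.trace (Xᴴ * X * (W * Matrix.diagonal (fun j => (c j : ℂ)) * Wᴴ))).re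
      ≤ (∑ i, (Matrix.isHermitian_conjTranspose_mul_self X).eigenvalues i ^ p) ^ (1/p) := by
  set hP := Matrix.isHermitian_conjTranspose_mul_self X with hPdef
  set lam := hP.eigenvalues with hlamdef
  have hlam0 : ∀ i, 0 ≤ lam i := Matrix.eigenvalues_conjTranspose_mul_self_nonneg X
  set Vu := hP.eigenvectorUnitary with hVdef
  set V : Matrix ι ι ℂ := (Vu : Matrix ι ι ℂ) with hVcoe
  have hspec : Xᴴ * X = V * Matrix.diagonal (fun i => ((lam i : ℝ) : ℂ)) * Vᴴ := by
    simpa [Matrix.star_eq_conjTranspose, Function.comp_def] using hP.spectral_theorem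
  set A : Matrix ι ι ℂ := Vᴴ * W with hAdef
  have hAu : A ∈ Matrix.unitaryGroup ι ℂ := by
    apply mul_mem _ hW
    rw [← Matrix.star_eq_conjTranspose]
    exact Unitary.star_mem Vu.2
  have htr : Matrix.trace (Xᴴ * X * (W * Matrix.diagonal (fun j => (c j : ℂ)) * Wᴴ))
      = Matrix.trace (Matrix.diagonal (fun i => (lam i : ℂ)) * A
        * Matrix.diagonal (fun j => (c j : ℂ)) * Aᴴ) := by
    rw [hspec]
    have h1 : V * Matrix.diagonal (fun i => ((lam i : ℝ) : ℂ)) * Vᴴ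
        * (W * Matrix.diagonal (fun j => (c j : ℂ)) * Wᴴ)
        = V * (Matrix.diagonal (fun i => (lam i : ℂ)) * (Vᴴ * W)
          * Matrix.diagonal (fun j => (c j : ℂ)) * Wᴴ) := by
      simp only [Matrix.mul_assoc]
    rw [h1, Matrix.trace_mul_comm]
    congr 1
    simp only [hAdef, Matrix.conjTranspose_mul, Matrix.conjTranspose_conjTranspose,
      Matrix.mul_assoc]
  rw [htr, trace_entry A lam c]
  set S : ι → ι → ℝ := fun i j => Complex.normSq (A i j) with hSdef
  have hS0 : ∀ i j, 0 ≤ S i j := fun i j => Complex.normSq_nonneg _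
  have hrow : ∀ i, ∑ j, S i j ≤ 1 := fun i => le_of_eq (unitary_row_sum hAu i)
  have hcol : ∀ j, ∑ i, S i j ≤ 1 := fun j => le_of_eq (unitary_col_sum hAu j)
  rcases hcase with ⟨hp1, hcq⟩ | ⟨hp1, hc1⟩
  · exact ds_sum_le hp1 S hS0 hrow hcol lam c hlam0 hc0 hcq
  · subst hp1
    have := ds_sum_le_one S hS0 hrow lam c hlam0 hc0 hc1
    simpa [Real.rpow_one] using this

private lemma trace_conj_self_re (M : Matrix ι ι ℂ) :
    (Matrix.trace (Mᴴ * M)).re = ∑ j, ∑ i, Complex.normSq (M i j) := by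
  rw [Matrix.trace, Complex.re_sum]
  apply Finset.sum_congr rfl
  intro j _
  rw [Matrix.diag_apply, Matrix.mul_apply, Complex.re_sum]
  apply Finset.sum_congr rfl
  intro i _
  rw [Matrix.conjTranspose_apply, Complex.star_def, mul_comm,
    Complex.mul_conj, Complex.ofReal_re]

private lemma abs_trace_le_sqrt (M N : Matrix ι ι ℂ) :
    ‖Matrix.trace (Mᴴ * N)‖ ≤
      Real.sqrt ((Matrix.trace (Mᴴ * M)).re) * Real.sqrt ((Matrix.trace (Nᴴ * N)).re) := by
  have habs : ‖Matrix.trace (Mᴴ * N)‖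
      ≤ ∑ j, ∑ i, ‖M i j‖ * ‖N i j‖ := by
    rw [Matrix.trace]
    refine (norm_sum_le _ _).trans ?_
    apply Finset.sum_le_sum
    intro j _
    rw [Matrix.diag_apply, Matrix.mul_apply]
    refine (norm_sum_le _ _).trans ?_
    apply Finset.sum_le_sum
    intro i _
    rw [Matrix.conjTranspose_apply, Complex.star_def, norm_mul,
      Complex.norm_conj]
  set F : ι × ι → ℝ := fun x => ‖M x.2 x.1‖ with hF
  set G : ι × ι → ℝ := fun x => ‖N x.2 x.1‖ with hG
  have hcs := Finset.sum_mul_sq_le_sq_mul_sq (univ : Finset (ι × ι)) F G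
  have h1 : ∑ j, ∑ i, ‖M i j‖ * ‖N i j‖
      = ∑ x ∈ (univ : Finset (ι × ι)), F x * G x := by
    rw [← Finset.univ_product_univ, Finset.sum_product]
  have h2 : (Matrix.trace (Mᴴ * M)).re = ∑ x ∈ (univ : Finset (ι × ι)), F x ^ 2 := by
    rw [trace_conj_self_re, ← Finset.univ_product_univ, Finset.sum_product]
    simp [hF, Complex.normSq_eq_norm_sq]
  have h3 : (Matrix.trace (Nᴴ * N)).re = ∑ x ∈ (univ : Finset (ι × ι)), G x ^ 2 := by
    rw [trace_conj_self_re, ← Finset.univ_product_univ, Finset.sum_product]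
    simp [hG, Complex.normSq_eq_norm_sq]
  rw [h2, h3, ← Real.sqrt_mul (by positivity)]
  refine habs.trans ?_
  rw [h1]
  have hFG : 0 ≤ ∑ x ∈ (univ : Finset (ι × ι)), F x * G x := by
    apply Finset.sum_nonneg; intro x _
    exact mul_nonneg (norm_nonneg _) (norm_nonneg _)
  rw [show ∑ x ∈ (univ : Finset (ι × ι)), F x * G x
      = Real.sqrt ((∑ x ∈ (univ : Finset (ι × ι)), F x * G x) ^ 2) from
      (Real.sqrt_sq hFG).symm]
  exact Real.sqrt_le_sqrt hcs

private lemma sqrt_bound_eq (p : ℝ) (hp : 1 ≤ p) (X : Matrix ι ι ℂ) :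
    Real.sqrt ((∑ i, (Matrix.isHermitian_conjTranspose_mul_self X).eigenvalues i ^ p) ^ (1/p))
      = schattenNorm (2*p) X := by
  have hp0 : p ≠ 0 := by positivity
  have hge : (0:ℝ) ≤ ∑ i, (Matrix.isHermitian_conjTranspose_mul_self X).eigenvalues i ^ p :=
    Finset.sum_nonneg fun i _ =>
      Real.rpow_nonneg (Matrix.eigenvalues_conjTranspose_mul_self_nonneg X i) _
  rw [schattenNorm]
  have h2 : (2 * p) / 2 = p := by ring
  rw [h2, Real.sqrt_eq_rpow, ← Real.rpow_mul hge]
  congr 1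
  field_simp

private lemma term_bound {p : ℝ} (hp : 1 ≤ p) (X Y : Matrix ι ι ℂ)
    (W : Matrix ι ι ℂ) (hW : W ∈ Matrix.unitaryGroup ι ℂ) (eps c : ι → ℝ)
    (heps : ∀ i, eps i = 1 ∨ eps i = -1) (hc0 : ∀ j, 0 ≤ c j)
    (hcase : (1 < p ∧ ∑ j, c j ^ (p/(p-1)) ≤ 1) ∨ (p = 1 ∧ ∀ j, c j ≤ 1)) :
    ‖Matrix.trace (Xᴴ * Y
        * (W * Matrix.diagonal (fun j => ((eps j * c j : ℝ) : ℂ)) * Wᴴ))‖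
      ≤ schattenNorm (2*p) X * schattenNorm (2*p) Y := by
  set C1 : Matrix ι ι ℂ :=
    W * Matrix.diagonal (fun j => ((eps j * Real.sqrt (c j) : ℝ) : ℂ)) * Wᴴ with hC1
  set C2 : Matrix ι ι ℂ :=
    W * Matrix.diagonal (fun j => ((Real.sqrt (c j) : ℝ) : ℂ)) * Wᴴ with hC2
  have hfun : (fun i => ((Real.sqrt (c i) : ℝ) : ℂ) * ((eps i * Real.sqrt (c i) : ℝ) : ℂ))
      = (fun j => ((eps j * c j : ℝ) : ℂ)) := by
    funext j
    rw [← Complex.ofReal_mul]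
    congr 1
    rw [show Real.sqrt (c j) * (eps j * Real.sqrt (c j))
      = eps j * (Real.sqrt (c j) * Real.sqrt (c j)) from by ring, Real.mul_self_sqrt (hc0 j)]
  have hM : Xᴴ * Y * (W * Matrix.diagonal (fun j => ((eps j * c j : ℝ) : ℂ)) * Wᴴ)
      = Xᴴ * Y * (C2 * C1) := by
    rw [hC1, hC2, unitary_conj_mul hW, hfun]
  have htr : Matrix.trace (Xᴴ * Y * (C2 * C1))
      = Matrix.trace ((X * C1ᴴ)ᴴ * (Y * C2)) := by
    have e : (X * C1ᴴ)ᴴ * (Y * C2) = C1 * (Xᴴ * Y * C2) := by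
      simp only [Matrix.conjTranspose_mul, Matrix.conjTranspose_conjTranspose, Matrix.mul_assoc]
    rw [show Xᴴ * Y * (C2 * C1) = (Xᴴ * (Y * C2)) * C1 from by simp only [Matrix.mul_assoc],
      Matrix.trace_mul_comm, e]
    simp only [Matrix.mul_assoc]
  -- squared norms
  have hXsq : (Matrix.trace ((X * C1ᴴ)ᴴ * (X * C1ᴴ))).re
      ≤ (∑ i, (Matrix.isHermitian_conjTranspose_mul_self X).eigenvalues i ^ p) ^ (1/p) := by
    have e : (X * C1ᴴ)ᴴ * (X * C1ᴴ) = (C1 * (Xᴴ * X)) * C1ᴴ := by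
      simp only [Matrix.conjTranspose_mul, Matrix.conjTranspose_conjTranspose, Matrix.mul_assoc]
    have e2 : Matrix.trace ((X * C1ᴴ)ᴴ * (X * C1ᴴ))
        = Matrix.trace (Xᴴ * X * (C1ᴴ * C1)) := by
      rw [e, Matrix.trace_mul_comm, ← Matrix.mul_assoc, Matrix.trace_mul_comm]
    have hcc : C1ᴴ * C1 = W * Matrix.diagonal (fun j => ((c j : ℝ) : ℂ)) * Wᴴ := by
      have hfun1 : (fun i => star (((eps i * Real.sqrt (c i) : ℝ)) : ℂ)
          * (((eps i * Real.sqrt (c i) : ℝ)) : ℂ)) = fun j => ((c j : ℝ) : ℂ) := by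
        funext j
        rw [Complex.star_def, Complex.conj_ofReal, ← Complex.ofReal_mul]
        congr 1
        rcases heps j with h | h <;>
          simp [h, show ∀ x:ℝ, -Real.sqrt x * -Real.sqrt x = Real.sqrt x * Real.sqrt x
            from fun x => by ring, Real.mul_self_sqrt (hc0 j)]
      rw [hC1, unitary_conj_ct, unitary_conj_mul hW, hfun1]
    rw [e2, hcc]
    exact trace_psd_bound hp X W hW c hc0 hcase
  have hYsq : (Matrix.trace ((Y * C2)ᴴ * (Y * C2))).re
      ≤ (∑ i, (Matrix.isHermitian_conjTranspose_mul_self Y).eigenvalues i ^ p) ^ (1/p) := by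
    have e : (Y * C2)ᴴ * (Y * C2) = (C2ᴴ * (Yᴴ * Y)) * C2 := by
      simp only [Matrix.conjTranspose_mul, Matrix.mul_assoc]
    have e2 : Matrix.trace ((Y * C2)ᴴ * (Y * C2))
        = Matrix.trace (Yᴴ * Y * (C2 * C2ᴴ)) := by
      rw [e, Matrix.trace_mul_comm, ← Matrix.mul_assoc, Matrix.trace_mul_comm]
    have hcc : C2 * C2ᴴ = W * Matrix.diagonal (fun j => ((c j : ℝ) : ℂ)) * Wᴴ := by
      have hfun2 : (fun i => ((Real.sqrt (c i) : ℝ) : ℂ)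
          * star (((Real.sqrt (c i) : ℝ)) : ℂ)) = fun j => ((c j : ℝ) : ℂ) := by
        funext j
        rw [Complex.star_def, Complex.conj_ofReal, ← Complex.ofReal_mul]
        congr 1
        exact Real.mul_self_sqrt (hc0 j)
      rw [hC2, unitary_conj_ct, unitary_conj_mul hW, hfun2]
    rw [e2, hcc]
    exact trace_psd_bound hp Y W hW c hc0 hcase
  calc ‖Matrix.trace (Xᴴ * Y
        * (W * Matrix.diagonal (fun j => ((eps j * c j : ℝ) : ℂ)) * Wᴴ))‖
      = ‖Matrix.trace ((X * C1ᴴ)ᴴ * (Y * C2))‖ := by rw [hM, htr]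
    _ ≤ Real.sqrt ((Matrix.trace ((X * C1ᴴ)ᴴ * (X * C1ᴴ))).re)
        * Real.sqrt ((Matrix.trace ((Y * C2)ᴴ * (Y * C2))).re) := abs_trace_le_sqrt _ _
    _ ≤ Real.sqrt ((∑ i, (Matrix.isHermitian_conjTranspose_mul_self X).eigenvalues i ^ p) ^ (1/p))
        * Real.sqrt ((∑ i, (Matrix.isHermitian_conjTranspose_mul_self Y).eigenvalues i ^ p) ^ (1/p))
        := by
        apply mul_le_mul (Real.sqrt_le_sqrt hXsq) (Real.sqrt_le_sqrt hYsq)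
          (Real.sqrt_nonneg _) (Real.sqrt_nonneg _)
    _ = schattenNorm (2*p) X * schattenNorm (2*p) Y := by
        rw [sqrt_bound_eq p hp X, sqrt_bound_eq p hp Y]

private lemma rpow_mul_self_half (x : ℝ) (hx : 0 ≤ x) (p : ℝ) :
    (x * x) ^ (p/2) = x ^ p := by
  rw [← pow_two, ← Real.rpow_natCast x 2, ← Real.rpow_mul hx]
  congr 1
  push_cast
  ring

private lemma schattenNorm_nonneg (p : ℝ) (A : Matrix ι ι ℂ) : 0 ≤ schattenNorm p A :=
  Real.rpow_nonneg (Finset.sum_nonneg fun i _ =>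
    Real.rpow_nonneg (Matrix.eigenvalues_conjTranspose_mul_self_nonneg A i) _) _

-- key: sum of f over eigenvalues of NᴴN when N = W diag(μ) Wᴴ hermitian

private lemma eig_conj_self_sum {N : Matrix ι ι ℂ}
    (W : Matrix ι ι ℂ) (hW : W ∈ Matrix.unitaryGroup ι ℂ) (μ : ι → ℝ)
    (hdec : N = W * Matrix.diagonal (fun i => (μ i : ℂ)) * Wᴴ) (f : ℝ → ℝ) :
    ∑ i, f ((Matrix.isHermitian_conjTranspose_mul_self N).eigenvalues i) = ∑ i, f (μ i * μ i) := by
  have hNh : N.IsHermitian → True := fun _ => trivial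
  have hdec2 : Nᴴ * N = W * Matrix.diagonal (fun i => ((μ i * μ i : ℝ) : ℂ)) * Wᴴ := by
    have hct : Nᴴ = W * Matrix.diagonal (fun i => (μ i : ℂ)) * Wᴴ := by
      rw [hdec]
      simp only [Matrix.conjTranspose_mul, Matrix.conjTranspose_conjTranspose,
        Matrix.diagonal_conjTranspose, Matrix.mul_assoc]
      congr 2
      ext i j
      simp [Matrix.diagonal_apply]
    rw [hct, hdec, unitary_conj_mul hW]
    congr 2
    funext i
    push_cast
    ring
  exact eig_sum_eq (Matrix.isHermitian_conjTranspose_mul_self N) W hW _ hdec2 f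

private lemma schatten_herm (p : ℝ) {S : Matrix ι ι ℂ} (hS : S.IsHermitian) :
    schattenNorm p S = (∑ i, |hS.eigenvalues i| ^ p) ^ (1/p) := by
  have hspec : S = (hS.eigenvectorUnitary : Matrix ι ι ℂ)
      * Matrix.diagonal (fun i => ((hS.eigenvalues i : ℝ) : ℂ))
      * (hS.eigenvectorUnitary : Matrix ι ι ℂ)ᴴ := by
    simpa [Matrix.star_eq_conjTranspose, Function.comp_def] using hS.spectral_theorem
  rw [schattenNorm]
  congr 1
  rw [eig_conj_self_sum _ (hS.eigenvectorUnitary).2 _ hspec (fun x => x ^ (p/2))]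
  apply Finset.sum_congr rfl
  intro i _
  rw [← abs_mul_abs_self (hS.eigenvalues i), rpow_mul_self_half _ (abs_nonneg _)]

private lemma schatten_sq (p : ℝ) (hp : 1 ≤ p) (O : Matrix ι ι ℂ) :
    schattenNorm p (Oᴴ * O) = (schattenNorm (2*p) O)^2 := by
  have hp0 : p ≠ 0 := by positivity
  set hP := Matrix.isHermitian_conjTranspose_mul_self O with hPdef
  set E := hP.eigenvalues with hE
  have hE0 : ∀ i, 0 ≤ E i := Matrix.eigenvalues_conjTranspose_mul_self_nonneg O
  have hspec : Oᴴ * O = (hP.eigenvectorUnitary : Matrix ι ι ℂ)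
      * Matrix.diagonal (fun i => ((E i : ℝ) : ℂ))
      * (hP.eigenvectorUnitary : Matrix ι ι ℂ)ᴴ := by
    simpa [Matrix.star_eq_conjTranspose, Function.comp_def] using hP.spectral_theorem
  have hsum0 : (0:ℝ) ≤ ∑ i, E i ^ p :=
    Finset.sum_nonneg fun i _ => Real.rpow_nonneg (hE0 i) _
  have h1 : schattenNorm p (Oᴴ * O) = (∑ i, E i ^ p) ^ (1/p) := by
    rw [schattenNorm]
    congr 1
    rw [eig_conj_self_sum _ (hP.eigenvectorUnitary).2 _ hspec (fun x => x ^ (p/2))]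
    exact Finset.sum_congr rfl fun i _ => rpow_mul_self_half _ (hE0 i) p
  have h2 : schattenNorm (2*p) O = (∑ i, E i ^ p) ^ (1/(2*p)) := by
    rw [schattenNorm]
    congr 1
    · apply Finset.sum_congr rfl
      intro i _
      congr 1
      ring
  rw [h1, h2, ← Real.rpow_natCast ((∑ i, E i ^ p) ^ (1/(2*p))) 2, ← Real.rpow_mul hsum0]
  congr 1
  field_simp
  norm_num

/-- **Approximation of squares of operators in Schatten norms** (Lemma 8): if
`‖O − Ot‖_{2p} ≤ δ ‖O‖_{2p}` with `0 ≤ δ ≤ 1`, then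
`‖O†O − Ot†Ot‖_p ≤ 3δ ‖O†O‖_p`. -/
theorem approximation_of_squares {ι : Type*} [Fintype ι] [DecidableEq ι]
    (O Ot : Matrix ι ι ℂ) (p δ : ℝ) (hp : 1 ≤ p) (hδ0 : 0 ≤ δ) (hδ1 : δ ≤ 1)
    (h : schattenNorm (2 * p) (O - Ot) ≤ δ * schattenNorm (2 * p) O) :
    schattenNorm p (Oᴴ * O - Otᴴ * Ot) ≤ 3 * δ * schattenNorm p (Oᴴ * O) := by
  classical
  have hp0 : p ≠ 0 := by positivity
  set D := O - Ot with hD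
  set S := Oᴴ * O - Otᴴ * Ot with hSdef
  have hSh : S.IsHermitian := (Matrix.isHermitian_conjTranspose_mul_self O).sub
    (Matrix.isHermitian_conjTranspose_mul_self Ot)
  set lam := hSh.eigenvalues with hlam
  set V : Matrix ι ι ℂ := (hSh.eigenvectorUnitary : Matrix ι ι ℂ) with hV
  have hVu : V ∈ Matrix.unitaryGroup ι ℂ := (hSh.eigenvectorUnitary).2
  have hspec : S = V * Matrix.diagonal (fun i => ((lam i : ℝ) : ℂ)) * Vᴴ := by
    simpa [Matrix.star_eq_conjTranspose, Function.comp_def] using hSh.spectral_theorem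
  set t := (∑ i, |lam i| ^ p) ^ (1/p) with htdef
  have hSt : schattenNorm p S = t := schatten_herm p hSh
  have hsum0' : (0:ℝ) ≤ ∑ i, |lam i| ^ p :=
    Finset.sum_nonneg fun i _ => Real.rpow_nonneg (abs_nonneg _) _
  have ht0 : 0 ≤ t := Real.rpow_nonneg hsum0' _
  have hRHS0 : 0 ≤ schattenNorm p (Oᴴ * O) := schattenNorm_nonneg _ _
  by_cases htz : t = 0
  · rw [hSt, htz]
    positivity
  have htpos : 0 < t := lt_of_le_of_ne ht0 (Ne.symm htz)
  have hsum_abs : ∑ i, |lam i| ^ p = t ^ p := by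
    rw [htdef, ← Real.rpow_mul hsum0', one_div, inv_mul_cancel₀ hp0, Real.rpow_one]
  set c : ι → ℝ := fun j => (|lam j| / t) ^ (p - 1) with hc
  set eps : ι → ℝ := fun j => if 0 ≤ lam j then 1 else -1 with hepsdef
  have hc0 : ∀ j, 0 ≤ c j := fun j => Real.rpow_nonneg (by positivity) _
  have hepspm : ∀ j, eps j = 1 ∨ eps j = -1 := fun j => by
    by_cases hj : 0 ≤ lam j <;> simp [hepsdef, hj]
  have hcase : (1 < p ∧ ∑ j, c j ^ (p/(p-1)) ≤ 1) ∨ (p = 1 ∧ ∀ j, c j ≤ 1) := by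
    rcases lt_or_eq_of_le hp with hp1 | hp1
    · left
      refine ⟨hp1, ?_⟩
      have hpm1 : p - 1 ≠ 0 := by
        have := hp1; intro hcon; linarith [sub_eq_zero.mp hcon]
      have e1 : ∀ j, c j ^ (p/(p-1)) = |lam j| ^ p / t ^ p := by
        intro j
        simp only [hc]
        rw [← Real.rpow_mul (by positivity)]
        rw [show (p-1) * (p/(p-1)) = p from by field_simp]
        exact Real.div_rpow (abs_nonneg _) ht0 _
      rw [Finset.sum_congr rfl fun j _ => e1 j, ← Finset.sum_div, hsum_abs,
        div_self (by positivity)]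
    · right
      refine ⟨hp1.symm, fun j => ?_⟩
      simp only [hc]
      rw [← hp1]
      simp
  set C : Matrix ι ι ℂ := V * Matrix.diagonal (fun j => ((eps j * c j : ℝ) : ℂ)) * Vᴴ with hC
  have hterm : ∀ i, |lam i| * c i = |lam i| ^ p / t ^ (p - 1) := by
    intro i
    simp only [hc]
    rw [Real.div_rpow (abs_nonneg _) ht0]
    by_cases hz : |lam i| = 0
    · rw [hz, Real.zero_rpow hp0]
      simp
    · have hpos : 0 < |lam i| := lt_of_le_of_ne (abs_nonneg _) (Ne.symm hz)
      rw [show |lam i| * (|lam i| ^ (p-1) / t ^ (p-1))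
          = (|lam i| ^ (1:ℝ) * |lam i| ^ (p-1)) / t ^ (p-1) from by rw [Real.rpow_one]; ring,
        ← Real.rpow_add hpos, show (1:ℝ) + (p - 1) = p from by ring]
  have htr : Matrix.trace (S * C) = (t : ℂ) := by
    rw [hspec, hC, unitary_conj_mul hVu, trace_unitary_conj hVu]
    have e1 : ∀ i, ((lam i : ℂ)) * ((eps i * c i : ℝ) : ℂ) = ((|lam i| * c i : ℝ) : ℂ) := by
      intro i
      rw [← Complex.ofReal_mul]
      congr 1
      rcases le_or_gt 0 (lam i) with hi | hi
      · rw [hepsdef]; simp [hi, abs_of_nonneg hi]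
      · rw [hepsdef]; simp [not_le.mpr hi, abs_of_neg hi]
    rw [Finset.sum_congr rfl fun i _ => e1 i, ← Complex.ofReal_sum]
    congr 1
    rw [Finset.sum_congr rfl fun i _ => hterm i, ← Finset.sum_div, hsum_abs,
      ← Real.rpow_sub htpos, show p - (p-1) = 1 from by ring, Real.rpow_one]
  have hdecomp : S = Oᴴ * D + Dᴴ * O - Dᴴ * D := by
    rw [hSdef, hD]
    simp only [Matrix.conjTranspose_sub]
    noncomm_ring
  set SO := schattenNorm (2*p) O with hSO
  set SD := schattenNorm (2*p) D with hSD
  have hSO0 : 0 ≤ SO := schattenNorm_nonneg _ _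
  have hSD0 : 0 ≤ SD := schattenNorm_nonneg _ _
  have hDle : SD ≤ δ * SO := h
  have hcomb : t ≤ SO * SD + SD * SO + SD * SD := by
    have e1 := term_bound hp O D V hVu eps c hepspm hc0 hcase
    have e2 := term_bound hp D O V hVu eps c hepspm hc0 hcase
    have e3 := term_bound hp D D V hVu eps c hepspm hc0 hcase
    have hsplit : Matrix.trace (S * C) = Matrix.trace (Oᴴ * D * C)
        + Matrix.trace (Dᴴ * O * C) - Matrix.trace (Dᴴ * D * C) := by
      rw [hdecomp]
      simp only [Matrix.add_mul, Matrix.sub_mul, Matrix.trace_add, Matrix.trace_sub]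
    have habs : t = ‖Matrix.trace (S * C)‖ := by
      rw [htr, Complex.norm_real, Real.norm_eq_abs, abs_of_nonneg ht0]
    rw [habs, hsplit]
    calc ‖Matrix.trace (Oᴴ * D * C) + Matrix.trace (Dᴴ * O * C)
          - Matrix.trace (Dᴴ * D * C)‖
        ≤ ‖Matrix.trace (Oᴴ * D * C) + Matrix.trace (Dᴴ * O * C)‖
          + ‖Matrix.trace (Dᴴ * D * C)‖ := by
          rw [sub_eq_add_neg]
          refine (norm_add_le _ _).trans ?_
          simp [map_neg]
      _ ≤ ‖Matrix.trace (Oᴴ * D * C)‖ + ‖Matrix.trace (Dᴴ * O * C)‖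
          + ‖Matrix.trace (Dᴴ * D * C)‖ := by
          have := norm_add_le (Matrix.trace (Oᴴ * D * C)) (Matrix.trace (Dᴴ * O * C))
          linarith
      _ ≤ SO * SD + SD * SO + SD * SD := by
          rw [hC] at *
          exact add_le_add (add_le_add e1 e2) e3
  have hfinal : t ≤ 3 * δ * (SO * SO) := by
    nlinarith [mul_le_mul_of_nonneg_left hDle hSO0, mul_le_mul_of_nonneg_right hDle hSO0,
      mul_le_mul hDle hDle hSD0 (by positivity : (0:ℝ) ≤ δ * SO),
      mul_nonneg hSO0 hSO0, mul_le_mul_of_nonneg_right hδ1 (mul_nonneg hSO0 hSO0)]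
  rw [hSt, schatten_sq p hp O]
  calc t ≤ 3 * δ * (SO * SO) := hfinal
    _ = 3 * δ * SO ^ 2 := by ring

end Paper
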